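/- For every natural number n, a(a(n)) = 2·a(n), where a is the increasing enumeration of odious numbers. -/

import Mathlib

/-- Sum of base-`d` digits of `n`. -/
def sdig (d n : ℕ) : ℕ := (Nat.digits d n).sum

/-- `t_d(n)`: base-`d` digit sum of `n`, reduced mod `d`. -/
def td (d n : ℕ) : ℕ := sdig d n % d

/-- `a_{j,d}(n)`: n-th natural (0-indexed, increasing) with base-`d` digit sum ≡ j mod d. -/
noncomputable def agen (d j n : ℕ) : ℕ := Nat.nth (fun k => sdig d k % d = j) n

/-- n-th odious number (binary digit sum odd), 0-indexed increasing. -/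
noncomputable def odious (n : ℕ) : ℕ := Nat.nth (fun k => (Nat.digits 2 k).sum % 2 = 1) n

/-- n-th evil number (binary digit sum even), 0-indexed increasing. -/
noncomputable def evil (n : ℕ) : ℕ := Nat.nth (fun k => (Nat.digits 2 k).sum % 2 = 0) n

/-- Thue–Morse sequence: parity of the binary digit sum. -/
def tm (n : ℕ) : ℕ := (Nat.digits 2 n).sum % 2

private def pOd (k : ℕ) : Prop := (Nat.digits 2 k).sum % 2 = 1

private instance : DecidablePred pOd := fun k => by unfold pOd; infer_instance

private lemma sum_two_mul (m : ℕ) :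
    (Nat.digits 2 (2 * m)).sum = (Nat.digits 2 m).sum := by
  rcases Nat.eq_zero_or_pos m with h | h
  · simp [h]
  · rw [Nat.digits_def' (by norm_num : 1 < 2) (by omega)]
    have h1 : (2 * m) % 2 = 0 := by omega
    have h2 : (2 * m) / 2 = m := by omega
    simp [h1, h2]

private lemma sum_two_mul_add_one (m : ℕ) :
    (Nat.digits 2 (2 * m + 1)).sum = (Nat.digits 2 m).sum + 1 := by
  rw [Nat.digits_def' (by norm_num : 1 < 2) (by omega), List.sum_cons]
  have h1 : (2 * m + 1) % 2 = 1 := by omega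
  have h2 : (2 * m + 1) / 2 = m := by omega
  rw [h1, h2, Nat.add_comm]

private lemma count_pOd (n : ℕ) : Nat.count pOd (2 * n) = n := by
  induction n with
  | zero => simp
  | succ k ih =>
    have e : 2 * (k + 1) = (2 * k + 1) + 1 := by ring
    rw [e, Nat.count_succ, Nat.count_succ, ih]
    by_cases h : pOd (2 * k)
    · have h' : ¬ pOd (2 * k + 1) := by
        unfold pOd at *; rw [sum_two_mul_add_one]; rw [sum_two_mul] at h; omega
      simp [h, h']
    · have h' : pOd (2 * k + 1) := by
        unfold pOd at *; rw [sum_two_mul_add_one]; rw [sum_two_mul] at h; omega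
      simp [h, h']

private lemma pOd_infinite : (setOf pOd).Infinite := by
  apply Set.infinite_of_injective_forall_mem (f := fun i : ℕ => 2 ^ i)
  · intro a b h
    exact Nat.pow_right_injective (le_refl 2) h
  · intro i
    show (Nat.digits 2 (2 ^ i)).sum % 2 = 1
    induction i with
    | zero => simp
    | succ j ih => rw [pow_succ, mul_comm, sum_two_mul]; exact ih

theorem stmt3 (n : ℕ) : odious (odious n) = 2 * odious n := by
  have hm : pOd (odious n) := Nat.nth_mem_of_infinite pOd_infinite n
  set m := odious n with hmdef
  have h2 : pOd (2 * m) := by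
    unfold pOd at *; rw [sum_two_mul]; exact hm
  have key := Nat.nth_count (p := pOd) h2
  rw [count_pOd] at key
  exact key
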